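/- arXiv:1612.03029 — 2 statements merged into one kernel-verified Lean document; each statement's English description precedes it below -/
import Mathlib

section
/- Let K ⊆ ℝ² be a nonempty compact convex set with 0 ∈ K and let st(K) be its Steiner point. Then for every x ∈ K: Area(F_x(K)) = Area(F₀(K)) − π·⟨x, st(K)⟩ + (π/2)·‖x‖². -/
open Metric Real Set MeasureTheory
open scoped RealInnerProductSpace

noncomputable section

/-- The Euclidean plane. -/
abbrev E2 := EuclideanSpace ℝ (Fin 2)

/-- The unit vector `u_θ = (cos θ, sin θ)`. -/
def uvec (θ : ℝ) : E2 := (WithLp.equiv 2 (Fin 2 → ℝ)).symm ![Real.cos θ, Real.sin θ]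

/-- The vector `v_θ = (−sin θ, cos θ)`. -/
def vvec (θ : ℝ) : E2 := (WithLp.equiv 2 (Fin 2 → ℝ)).symm ![-Real.sin θ, Real.cos θ]

/-- The Voronoi flower of `L` with respect to `x`: the union over `s ∈ L` of the closed
balls admitting the segment `[x, s]` as a diameter. -/
def vflower (x : E2) (L : Set E2) : Set E2 :=
  ⋃ s ∈ L, closedBall ((2:ℝ)⁻¹ • (x + s)) (‖s - x‖ / 2)

/-- The support function of `L` with respect to `x`: `p_x(L, w) = sup_{s ∈ L} ⟨s − x, w⟩`. -/
def suppf (x : E2) (L : Set E2) (w : E2) : ℝ :=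
  sSup ((fun s => ⟪s - x, w⟫) '' L)

/-- The Steiner point: `st(K) = (1/π) ∫₀^{2π} p₀(K, u_θ) · u_θ dθ`. -/
def steinerPt (K : Set E2) : E2 :=
  (π⁻¹ : ℝ) • ∫ θ in (0:ℝ)..(2*π), suppf 0 K (uvec θ) • uvec θ

section Aux

lemma uvec_apply0 (θ : ℝ) : uvec θ 0 = Real.cos θ := rfl
lemma uvec_apply1 (θ : ℝ) : uvec θ 1 = Real.sin θ := rfl

lemma inner_uvec (x : E2) (θ : ℝ) : ⟪x, uvec θ⟫ = x 0 * Real.cos θ + x 1 * Real.sin θ := by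
  simp [PiLp.inner_apply, Fin.sum_univ_two, uvec, RCLike.inner_apply]
  ring

lemma norm_uvec (θ : ℝ) : ‖uvec θ‖ = 1 := by
  have h : ⟪uvec θ, uvec θ⟫ = 1 := by
    rw [inner_uvec, uvec_apply0, uvec_apply1]
    nlinarith [Real.sin_sq_add_cos_sq θ]
  have := real_inner_self_eq_norm_sq (uvec θ)
  nlinarith [norm_nonneg (uvec θ)]

lemma smul_uvec (r θ : ℝ) : r • uvec θ = (WithLp.equiv 2 (Fin 2 → ℝ)).symm ![r * Real.cos θ, r * Real.sin θ] := by
  ext i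
  fin_cases i <;> simp [uvec]

variable {K : Set E2} {x w : E2}

lemma suppf_continuous_aux : Continuous fun s : E2 => ⟪s - x, w⟫ :=
  (continuous_id.sub continuous_const).inner continuous_const

lemma suppf_bdd (hKc : IsCompact K) : BddAbove ((fun s => ⟪s - x, w⟫) '' K) :=
  (hKc.image suppf_continuous_aux).bddAbove

lemma le_suppf (hKc : IsCompact K) {s : E2} (hs : s ∈ K) : ⟪s - x, w⟫ ≤ suppf x K w :=
  le_csSup (suppf_bdd hKc) (Set.mem_image_of_mem _ hs)

lemma suppf_le (hne : K.Nonempty) {c : ℝ} (h : ∀ s ∈ K, ⟪s - x, w⟫ ≤ c) : suppf x K w ≤ c :=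
  csSup_le (hne.image _) (by rintro _ ⟨s, hs, rfl⟩; exact h s hs)

lemma suppf_nonneg (hKc : IsCompact K) (hx : x ∈ K) : 0 ≤ suppf x K w := by
  have := le_suppf (x := x) (w := w) hKc hx
  simpa using this

lemma exists_suppf_eq (hne : K.Nonempty) (hKc : IsCompact K) :
    ∃ s ∈ K, suppf x K w = ⟪s - x, w⟫ := by
  have h := (hKc.image (suppf_continuous_aux (x := x) (w := w))).sSup_mem (hne.image _)
  obtain ⟨s, hs, hval⟩ := h
  exact ⟨s, hs, hval.symm⟩

lemma suppf_eq_sub (hne : K.Nonempty) (hKc : IsCompact K) :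
    suppf x K w = suppf 0 K w - ⟪x, w⟫ := by
  apply le_antisymm
  · apply suppf_le hne
    intro s hs
    have := le_suppf (x := 0) (w := w) hKc hs
    simp only [sub_zero] at this
    rw [inner_sub_left]
    linarith [this]
  · rw [sub_le_iff_le_add]
    apply suppf_le hne
    intro s hs
    have := le_suppf (x := x) (w := w) hKc hs
    rw [sub_zero, ← sub_add_cancel s x, inner_add_left]
    linarith [this]

lemma suppf_smul (hne : K.Nonempty) (hKc : IsCompact K) {c : ℝ} (hc : 0 ≤ c) :
    suppf x K (c • w) = c * suppf x K w := by
  apply le_antisymm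
  · apply suppf_le hne
    intro s hs
    rw [inner_smul_right]
    exact mul_le_mul_of_nonneg_left (le_suppf hKc hs) hc
  · obtain ⟨s, hs, hval⟩ := exists_suppf_eq (x := x) (w := w) hne hKc
    rw [hval, ← inner_smul_right _ _ _]
    exact le_suppf hKc hs

lemma suppf_lipschitz (hne : K.Nonempty) (hKc : IsCompact K) {C : ℝ}
    (hC : ∀ s ∈ K, ‖s - x‖ ≤ C) (w w' : E2) :
    suppf x K w - suppf x K w' ≤ C * ‖w - w'‖ := by
  rw [sub_le_iff_le_add]
  apply suppf_le hne
  intro s hs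
  have h1 : ⟪s - x, w⟫ = ⟪s - x, w'⟫ + ⟪s - x, w - w'⟫ := by
    rw [← inner_add_right]; congr 1; abel
  rw [h1]
  have h2 : ⟪s - x, w - w'⟫ ≤ C * ‖w - w'‖ := by
    calc ⟪s - x, w - w'⟫ ≤ ‖s - x‖ * ‖w - w'‖ := real_inner_le_norm _ _
    _ ≤ C * ‖w - w'‖ := by
        exact mul_le_mul_of_nonneg_right (hC s hs) (norm_nonneg _)
  linarith [le_suppf (x := x) (w := w') hKc hs]

lemma suppf_continuous (hne : K.Nonempty) (hKc : IsCompact K) (x : E2) :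
    Continuous (suppf x K) := by
  obtain ⟨C, hC⟩ := (hKc.image (continuous_norm.comp (continuous_id.sub continuous_const))).bddAbove
  simp only [mem_upperBounds, Set.mem_image] at hC
  have hC' : ∀ s ∈ K, ‖s - x‖ ≤ C := fun s hs => hC _ ⟨s, hs, rfl⟩
  have hC0 : 0 ≤ C := by
    obtain ⟨s, hs⟩ := hne
    exact le_trans (norm_nonneg _) (hC' s hs)
  have : LipschitzWith (Real.toNNReal C) (suppf x K) := by
    apply LipschitzWith.of_dist_le_mul
    intro w w'
    rw [Real.dist_eq, dist_eq_norm, Real.coe_toNNReal _ hC0, abs_sub_le_iff]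
    constructor
    · exact suppf_lipschitz hne hKc hC' w w'
    · have := suppf_lipschitz hne hKc hC' w' w
      rwa [norm_sub_rev] at this
  exact this.continuous

-- ball membership
lemma mem_diam_ball_iff (x s z : E2) :
    z ∈ closedBall ((2:ℝ)⁻¹ • (x + s)) (‖s - x‖ / 2) ↔ ‖z - x‖ ^ 2 ≤ ⟪s - x, z - x⟫ := by
  rw [mem_closedBall, dist_eq_norm]
  have hrw : z - (2:ℝ)⁻¹ • (x + s) = (z - x) - (2:ℝ)⁻¹ • (s - x) := by
    module
  rw [hrw]
  have hsq : ‖(z - x) - (2:ℝ)⁻¹ • (s - x)‖ ^ 2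
      = ‖z - x‖ ^ 2 - ⟪s - x, z - x⟫ + (‖s - x‖ / 2) ^ 2 := by
    rw [norm_sub_sq_real, inner_smul_right, norm_smul]
    have : ⟪z - x, s - x⟫ = ⟪s - x, z - x⟫ := real_inner_comm _ _
    rw [this]
    simp [norm_smul]
    ring
  constructor
  · intro h
    have h2 : ‖(z - x) - (2:ℝ)⁻¹ • (s - x)‖ ^ 2 ≤ (‖s - x‖ / 2) ^ 2 := by
      apply pow_le_pow_left₀ (norm_nonneg _) h
    nlinarith [hsq]
  · intro h
    have h2 : ‖(z - x) - (2:ℝ)⁻¹ • (s - x)‖ ^ 2 ≤ (‖s - x‖ / 2) ^ 2 := by nlinarith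
    exact le_of_sq_le_sq h2 (by positivity)

lemma le_suppf' {K : Set E2} {x w : E2} (hKc : IsCompact K) {s : E2} (hs : s ∈ K) :
    ⟪s - x, w⟫ ≤ suppf x K w :=
  le_csSup (hKc.image ((continuous_id.sub continuous_const).inner continuous_const)).bddAbove
    (Set.mem_image_of_mem _ hs)

lemma exists_suppf_eq' {K : Set E2} {x w : E2} (hne : K.Nonempty) (hKc : IsCompact K) :
    ∃ s ∈ K, suppf x K w = ⟪s - x, w⟫ := by
  obtain ⟨s, hs, hval⟩ :=
    (hKc.image ((continuous_id.sub continuous_const).inner continuous_const)).sSup_mem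
      (hne.image (fun s => ⟪s - x, w⟫))
  exact ⟨s, hs, hval.symm⟩

lemma mem_vflower_iff {K : Set E2} (hne : K.Nonempty) (hKc : IsCompact K) (x z : E2) :
    z ∈ vflower x K ↔ ‖z - x‖ ^ 2 ≤ suppf x K (z - x) := by
  simp only [vflower, Set.mem_iUnion, exists_prop]
  constructor
  · rintro ⟨s, hs, hball⟩
    exact le_trans ((mem_diam_ball_iff x s z).1 hball) (le_suppf' hKc hs)
  · intro h
    obtain ⟨s, hs, hval⟩ := exists_suppf_eq' (x := x) (w := z - x) hne hKc
    exact ⟨s, hs, (mem_diam_ball_iff x s z).2 (hval ▸ h)⟩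

lemma vflower_preimage {K : Set E2} (hne : K.Nonempty) (hKc : IsCompact K) (x : E2) :
    (fun y => x + y) ⁻¹' vflower x K = {y : E2 | ‖y‖ ^ 2 ≤ suppf x K y} := by
  ext y
  rw [Set.mem_preimage, mem_vflower_iff hne hKc]
  simp

lemma volume_vflower_eq {K : Set E2} (hne : K.Nonempty) (hKc : IsCompact K) (x : E2) :
    volume (vflower x K) = volume {y : E2 | ‖y‖ ^ 2 ≤ suppf x K y} := by
  rw [← vflower_preimage hne hKc x, measure_preimage_add]

-- Tmap
def Tmap (p : ℝ × ℝ) : E2 := (WithLp.equiv 2 (Fin 2 → ℝ)).symm ![p.1, p.2]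

lemma Tmap_measurePreserving : MeasurePreserving Tmap volume volume := by
  have h1 := (MeasureTheory.volume_preserving_finTwoArrow ℝ).symm
  have h2 := (EuclideanSpace.volume_preserving_symm_measurableEquiv_toLp (Fin 2)).symm
  have := h2.comp h1
  convert this using 1
  · rfl
  · rfl

lemma Tmap_polar (p : ℝ × ℝ) : Tmap (polarCoord.symm p) = p.1 • uvec p.2 := by
  ext i
  rw [polarCoord_symm_apply]
  fin_cases i <;> simp [Tmap, uvec]

lemma uvec_continuous : Continuous uvec := by
  apply Continuous.comp (PiLp.continuous_toLp (p := 2) (β := fun _ : Fin 2 => ℝ))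
  apply continuous_pi
  intro i
  fin_cases i <;> simp <;> continuity

lemma uvec_periodic : Function.Periodic uvec (2 * π) := by
  intro θ
  ext i
  fin_cases i <;> simp [uvec, Real.cos_add_two_pi, Real.sin_add_two_pi]

lemma norm_sq_coords (x : E2) : ‖x‖ ^ 2 = (x 0) ^ 2 + (x 1) ^ 2 := by
  rw [← real_inner_self_eq_norm_sq]
  simp only [PiLp.inner_apply, Fin.sum_univ_two, RCLike.inner_apply, conj_trivial]
  ring


lemma volume_S (K : Set E2) (x : E2) (hne : K.Nonempty) (hKc : IsCompact K) (hx : x ∈ K) :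
    (volume (vflower x K)).toReal
      = (1/2) * ∫ θ in (0:ℝ)..(2*π), suppf x K (uvec θ) ^ 2 := by
  set g := suppf x K with hg
  have hgc : Continuous g := suppf_continuous hne hKc x
  set h : ℝ → ℝ := fun θ => g (uvec θ) with hh
  have hh0 : ∀ θ, 0 ≤ h θ := fun θ => suppf_nonneg hKc hx
  -- bound C
  obtain ⟨C, hC⟩ := (hKc.image (continuous_norm.comp
    (continuous_id.sub continuous_const))).bddAbove
  simp only [mem_upperBounds, Set.mem_image] at hC
  have hC' : ∀ s ∈ K, ‖s - x‖ ≤ C := fun s hs => hC _ ⟨s, hs, rfl⟩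
  have hhC : ∀ θ, h θ ≤ C := by
    intro θ
    apply suppf_le hne
    intro s hs
    calc ⟪s - x, uvec θ⟫ ≤ ‖s - x‖ * ‖uvec θ‖ := real_inner_le_norm _ _
    _ ≤ C := by rw [norm_uvec]; simpa using hC' s hs
  have hC0 : 0 ≤ C := le_trans (hh0 0) (hhC 0)
  -- the sublevel set
  set S : Set E2 := {y : E2 | ‖y‖ ^ 2 ≤ g y} with hS
  have hSclosed : IsClosed S := isClosed_le (by continuity) hgc
  have hSm : MeasurableSet S := hSclosed.measurableSet
  have hAm : MeasurableSet (Tmap ⁻¹' S) := Tmap_measurePreserving.measurable hSm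
  -- volume to integral
  have step1 : volume (vflower x K) = volume (Tmap ⁻¹' S) := by
    rw [volume_vflower_eq hne hKc x,
      Tmap_measurePreserving.measure_preimage hSm.nullMeasurableSet]
  have step2 : (volume (Tmap ⁻¹' S)).toReal
      = ∫ p : ℝ × ℝ, (Tmap ⁻¹' S).indicator (fun _ => (1:ℝ)) p := by
    rw [integral_indicator hAm, setIntegral_const, smul_eq_mul, mul_one]
    rfl
  -- polar change of variables
  have step3 : ∫ p : ℝ × ℝ, (Tmap ⁻¹' S).indicator (fun _ => (1:ℝ)) p
      = ∫ p in polarCoord.target, p.1 • (Tmap ⁻¹' S).indicator (fun _ => (1:ℝ))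
          (polarCoord.symm p) :=
    (integral_comp_polarCoord_symm _).symm
  -- pointwise identification on the target
  set F : ℝ × ℝ → ℝ := fun p => if p.1 ≤ h p.2 then p.1 else 0 with hF
  have hFmeas : Measurable F := by
    apply Measurable.ite _ measurable_fst measurable_const
    exact (isClosed_le continuous_fst ((hgc.comp uvec_continuous).comp continuous_snd)).measurableSet
  have step4 : ∫ p in polarCoord.target, p.1 • (Tmap ⁻¹' S).indicator (fun _ => (1:ℝ))
      (polarCoord.symm p) = ∫ p in polarCoord.target, F p := by
    apply setIntegral_congr_fun polarCoord.open_target.measurableSet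
    intro p hp
    rw [polarCoord_target] at hp
    obtain ⟨hp1, hp2⟩ := hp
    have hp1' : (0:ℝ) < p.1 := hp1
    have hmem : polarCoord.symm p ∈ Tmap ⁻¹' S ↔ p.1 ≤ h p.2 := by
      rw [Set.mem_preimage, Tmap_polar]
      have h1 : ‖p.1 • uvec p.2‖ ^ 2 = p.1 ^ 2 := by
        rw [norm_smul, norm_uvec, mul_one, Real.norm_eq_abs, sq_abs]
      have h2 : g (p.1 • uvec p.2) = p.1 * h p.2 := suppf_smul hne hKc hp1'.le
      rw [hS, Set.mem_setOf_eq, h1, h2]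
      constructor
      · intro hle
        nlinarith
      · intro hle
        nlinarith
    show p.1 • (Tmap ⁻¹' S).indicator (fun _ => (1:ℝ)) (polarCoord.symm p) = F p
    by_cases hcond : p.1 ≤ h p.2
    · rw [Set.indicator_of_mem (hmem.2 hcond)]
      simp [hF, hcond]
    · rw [Set.indicator_of_notMem (fun hc => hcond (hmem.1 hc))]
      simp [hF, hcond]
  -- restrict to a finite box
  set B : Set ℝ := Ioo (-π) π with hB
  set A : Set ℝ := Ioc 0 C with hA
  have step5 : ∫ p in polarCoord.target, F p = ∫ p in A ×ˢ B, F p := by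
    rw [polarCoord_target]
    apply setIntegral_eq_of_subset_of_forall_diff_eq_zero
      ((measurableSet_Ioi).prod measurableSet_Ioo)
      (Set.prod_mono (Set.Ioc_subset_Ioi_self) (subset_refl _))
    rintro p ⟨⟨hp1, hp2⟩, hnp⟩
    have : ¬ (p.1 ≤ h p.2) := by
      intro hle
      exact hnp ⟨⟨hp1, le_trans hle (hhC p.2)⟩, hp2⟩
    simp [hF, this]
  -- Fubini
  have hABfin : (volume.prod volume) (A ×ˢ B) ≠ ⊤ := by
    rw [Measure.prod_prod]
    exact (ENNReal.mul_lt_top measure_Ioc_lt_top measure_Ioo_lt_top).ne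
  have hFint : Integrable F ((volume.restrict A).prod (volume.restrict B)) := by
    rw [Measure.prod_restrict]
    apply Measure.integrableOn_of_bounded (M := C)
    · rw [← Measure.volume_eq_prod] at hABfin
      exact hABfin
    · exact hFmeas.aestronglyMeasurable
    · filter_upwards [ae_restrict_mem ((measurableSet_Ioc).prod measurableSet_Ioo)]
      rintro p ⟨⟨hp1, hp1'⟩, _⟩
      rw [hF, Real.norm_eq_abs]
      simp only []
      split_ifs
      · rw [abs_of_pos hp1]; exact hp1'
      · rwa [abs_zero]
  have step6 : ∫ p in A ×ˢ B, F p = ∫ θ in B, ∫ r in A, F (r, θ) := by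
    rw [Measure.volume_eq_prod, ← Measure.prod_restrict]
    exact integral_prod_symm F hFint
  -- inner integral
  have step7 : ∀ θ, 0 ≤ h θ → h θ ≤ C → ∫ r in A, F (r, θ) = h θ ^ 2 / 2 := by
    intro θ h0 hC1
    have e1 : ∀ r : ℝ, F (r, θ) = (Iic (h θ)).indicator id r := by
      intro r
      simp [hF, Set.indicator_apply]
    simp_rw [e1]
    rw [setIntegral_indicator measurableSet_Iic]
    have e2 : A ∩ Iic (h θ) = Ioc 0 (h θ) := by
      ext r
      simp only [hA, Set.mem_inter_iff, Set.mem_Ioc, Set.mem_Iic]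
      constructor
      · rintro ⟨⟨hr1, _⟩, hr3⟩; exact ⟨hr1, hr3⟩
      · rintro ⟨hr1, hr2⟩; exact ⟨⟨hr1, le_trans hr2 hC1⟩, hr2⟩
    rw [e2, ← intervalIntegral.integral_of_le h0]
    simp [integral_id]
  have step8 : ∫ θ in B, ∫ r in A, F (r, θ) = ∫ θ in B, h θ ^ 2 / 2 := by
    apply setIntegral_congr_fun measurableSet_Ioo
    intro θ _
    exact step7 θ (hh0 θ) (hhC θ)
  -- to interval integral and periodicity
  have hper : Function.Periodic (fun θ => h θ ^ 2 / 2) (2 * π) := by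
    intro θ
    simp only [hh]
    rw [uvec_periodic θ]
  have step9 : ∫ θ in B, h θ ^ 2 / 2 = ∫ θ in (0:ℝ)..(2*π), h θ ^ 2 / 2 := by
    rw [hB, ← integral_Ioc_eq_integral_Ioo,
      ← intervalIntegral.integral_of_le (by linarith [Real.pi_pos] : (-π:ℝ) ≤ π)]
    have := hper.intervalIntegral_add_eq (-π) 0
    rw [show -π + 2 * π = π by ring, zero_add] at this
    exact this
  rw [step1, step2, step3, step4, step5, step6, step8, step9]
  rw [intervalIntegral.integral_div]
  ring


end Aux

/-- for `x ∈ K`,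
`Area(F_x(K)) = Area(F₀(K)) − π⟨x, st(K)⟩ + (π/2)‖x‖²`. -/
theorem area_flower_translate (K : Set E2) (hKne : K.Nonempty) (hKc : IsCompact K)
    (hKconv : Convex ℝ K) (h0 : (0:E2) ∈ K) :
    ∀ x ∈ K,
      (volume (vflower x K)).toReal
        = (volume (vflower 0 K)).toReal - π * ⟪x, steinerPt K⟫ + (π / 2) * ‖x‖ ^ 2 := by
  intro x hx
  have hvx := volume_S K x hKne hKc hx
  have hv0 := volume_S K 0 hKne hKc h0
  set a : ℝ → ℝ := fun θ => suppf 0 K (uvec θ) with ha_def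
  set b : ℝ → ℝ := fun θ => ⟪x, uvec θ⟫ with hb_def
  have ha : Continuous a := (suppf_continuous hKne hKc 0).comp uvec_continuous
  have hb : Continuous b := continuous_const.inner uvec_continuous
  -- rewrite suppf x
  have hEq : ∀ θ, suppf x K (uvec θ) = a θ - b θ := fun θ => suppf_eq_sub hKne hKc
  -- expansion of the square
  have hint_a2 : IntervalIntegrable (fun θ => a θ ^ 2) volume 0 (2*π) :=
    (ha.pow 2).intervalIntegrable _ _
  have hint_ab : IntervalIntegrable (fun θ => a θ * b θ) volume 0 (2*π) :=
    (ha.mul hb).intervalIntegrable _ _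
  have hint_b2 : IntervalIntegrable (fun θ => b θ ^ 2) volume 0 (2*π) :=
    (hb.pow 2).intervalIntegrable _ _
  have hsplit : ∫ θ in (0:ℝ)..(2*π), suppf x K (uvec θ) ^ 2
      = (∫ θ in (0:ℝ)..(2*π), a θ ^ 2) - 2 * (∫ θ in (0:ℝ)..(2*π), a θ * b θ)
        + (∫ θ in (0:ℝ)..(2*π), b θ ^ 2) := by
    have e : ∀ θ, suppf x K (uvec θ) ^ 2 = (a θ ^ 2 - 2 * (a θ * b θ)) + b θ ^ 2 := by
      intro θ; rw [hEq θ]; ring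
    simp_rw [e]
    rw [intervalIntegral.integral_add (hint_a2.sub (hint_ab.const_mul 2)) hint_b2,
      intervalIntegral.integral_sub hint_a2 (hint_ab.const_mul 2),
      intervalIntegral.integral_const_mul]
  -- Steiner point identity
  have hsteiner : ∫ θ in (0:ℝ)..(2*π), a θ * b θ = π * ⟪x, steinerPt K⟫ := by
    have hint : IntervalIntegrable (fun θ => a θ • uvec θ) volume 0 (2*π) :=
      (ha.smul uvec_continuous).intervalIntegrable _ _
    have h1 : ∫ θ in (0:ℝ)..(2*π), a θ * b θ
        = ⟪x, ∫ θ in (0:ℝ)..(2*π), a θ • uvec θ⟫ := by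
      calc ∫ θ in (0:ℝ)..(2*π), a θ * b θ
          = ∫ θ in (0:ℝ)..(2*π), (innerSL ℝ x) (a θ • uvec θ) := by
            congr 1
            funext θ
            rw [innerSL_apply_apply, real_inner_smul_right]
        _ = (innerSL ℝ x) (∫ θ in (0:ℝ)..(2*π), a θ • uvec θ) :=
            ContinuousLinearMap.intervalIntegral_comp_comm _ hint
        _ = _ := innerSL_apply_apply _ _ _
    rw [h1, steinerPt, real_inner_smul_right]
    field_simp
    rfl
  -- second moment identity
  have hmoment : ∫ θ in (0:ℝ)..(2*π), b θ ^ 2 = π * ‖x‖ ^ 2 := by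
    have e : ∀ θ, b θ ^ 2 = (x 0 ^ 2 * Real.cos θ ^ 2 + x 1 ^ 2 * Real.sin θ ^ 2)
        + (2 * x 0 * x 1) * (Real.sin θ * Real.cos θ) := by
      intro θ
      rw [hb_def]
      simp only []
      rw [inner_uvec]
      ring
    simp_rw [e]
    rw [intervalIntegral.integral_add
      (f := fun θ => x 0 ^ 2 * Real.cos θ ^ 2 + x 1 ^ 2 * Real.sin θ ^ 2)
      (g := fun θ => 2 * x 0 * x 1 * (Real.sin θ * Real.cos θ))
      (((continuous_const.mul (Real.continuous_cos.pow 2)).add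
        (continuous_const.mul (Real.continuous_sin.pow 2))).intervalIntegrable _ _)
      ((continuous_const.mul (Real.continuous_sin.mul Real.continuous_cos)).intervalIntegrable _ _),
      intervalIntegral.integral_add
      (f := fun θ => x 0 ^ 2 * Real.cos θ ^ 2) (g := fun θ => x 1 ^ 2 * Real.sin θ ^ 2)
      ((continuous_const.mul (Real.continuous_cos.pow 2)).intervalIntegrable _ _)
      ((continuous_const.mul (Real.continuous_sin.pow 2)).intervalIntegrable _ _),
      intervalIntegral.integral_const_mul, intervalIntegral.integral_const_mul,
      intervalIntegral.integral_const_mul, integral_cos_sq, integral_sin_sq,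
      integral_sin_mul_cos₁, norm_sq_coords]
    simp [Real.sin_two_pi, Real.cos_two_pi]
    ring
  rw [hvx, hv0, hsplit, hsteiner, hmoment]
  have : (∫ θ in (0:ℝ)..(2*π), suppf 0 K (uvec θ) ^ 2) = ∫ θ in (0:ℝ)..(2*π), a θ ^ 2 := by
    apply intervalIntegral.integral_congr
    intro θ _
    rfl
  rw [this]
  ring
end
end

section
/- Let K ⊆ ℝ² be a nonempty compact convex set with 0 ∈ interior K, let D = ⋃_{x ∈ K} closedBall(x, ‖x‖) (the image of the Voronoi flower F₀(K) under the homothety y ↦ 2y), and let d(θ) = sup{t ≥ 0 : t·u_θ ∈ D} be the radial function of D. Assume θ ↦ d(θ) is differentiable on ℝ. Then d(θ) = 2·p₀(K, u_θ) for every θ, and the frontier of K (the antiorthotomic curve Γ_D of D with respect to the origin) admits the parametrization frontier K = { (1/2)·(d(θ)·u_θ + d'(θ)·v_θ) : θ ∈ ℝ }. -/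
open Metric Real Set MeasureTheory
open scoped RealInnerProductSpace

noncomputable section

lemma inner_vvec (x : E2) (θ : ℝ) : ⟪x, vvec θ⟫ = -(x 0 * Real.sin θ) + x 1 * Real.cos θ := by
  simp [vvec, PiLp.inner_apply, Fin.sum_univ_two]
  ring

lemma uvec_comb (θ φ : ℝ) : uvec φ = Real.cos (φ - θ) • uvec θ + Real.sin (φ - θ) • vvec θ := by
  have h := Real.sin_sq_add_cos_sq θ
  ext i
  fin_cases i
  · simp [uvec, vvec, Real.cos_sub, Real.sin_sub]
    linear_combination (-(Real.cos φ)) * h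
  · simp [uvec, vvec, Real.cos_sub, Real.sin_sub]
    linear_combination (-(Real.sin φ)) * h

lemma decomp (x : E2) (θ : ℝ) : x = ⟪x, uvec θ⟫ • uvec θ + ⟪x, vvec θ⟫ • vvec θ := by
  have h := Real.sin_sq_add_cos_sq θ
  ext i
  fin_cases i
  · simp [inner_uvec, inner_vvec, uvec, vvec, PiLp.inner_apply, Fin.sum_univ_two]
    linear_combination (-(x 0)) * h
  · simp [inner_uvec, inner_vvec, uvec, vvec, PiLp.inner_apply, Fin.sum_univ_two]
    linear_combination (-(x 1)) * h

lemma exists_unit_angle (w : E2) (hw : ‖w‖ = 1) : ∃ θ : ℝ, uvec θ = w := by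
  set z : ℂ := ⟨w 0, w 1⟩ with hz
  have habs : ‖z‖ = 1 := by
    rw [Complex.norm_def, Complex.normSq_mk]
    rw [EuclideanSpace.norm_eq] at hw
    simpa [Fin.sum_univ_two, pow_two] using hw
  have hz0 : z ≠ 0 := by
    intro h; rw [h] at habs; simp at habs
  refine ⟨Complex.arg z, ?_⟩
  have hc : Real.cos (Complex.arg z) = w 0 := by
    rw [Complex.cos_arg hz0, habs]; simp [hz]
  have hs : Real.sin (Complex.arg z) = w 1 := by
    rw [Complex.sin_arg, habs]; simp [hz]
  ext i; fin_cases i <;> simp [uvec, hc, hs]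

/-- with `D = ⋃_{x ∈ K} closedBall x ‖x‖` (the image of `F₀(K)` under the
homothety `y ↦ 2y`) and `d` the radial function of `D`, assumed differentiable, one has
`d(θ) = 2 p₀(K, u_θ)` and the antiorthotomic curve (the frontier of `K`) is
parametrized by `θ ↦ (1/2)(d(θ)·u_θ + d'(θ)·v_θ)`. -/
theorem antiorthotomic_parametrization (K : Set E2) (hKne : K.Nonempty)
    (hKc : IsCompact K) (hKconv : Convex ℝ K) (h0 : (0:E2) ∈ interior K)
    (D : Set E2) (hD : D = ⋃ x ∈ K, closedBall x ‖x‖)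
    (d : ℝ → ℝ) (hd : ∀ θ, d θ = sSup {t : ℝ | 0 ≤ t ∧ t • uvec θ ∈ D})
    (hdiff : Differentiable ℝ d) :
    (∀ θ : ℝ, d θ = 2 * suppf 0 K (uvec θ)) ∧
    frontier K
      = {y : E2 | ∃ θ : ℝ, y = (2:ℝ)⁻¹ • (d θ • uvec θ + deriv d θ • vvec θ)} := by
  have hKclosed : IsClosed K := hKc.isClosed
  set p : ℝ → ℝ := fun θ => suppf 0 K (uvec θ) with hp
  -- maximizers exist and compute p
  have hmax : ∀ θ : ℝ, ∃ x ∈ K, (∀ s ∈ K, ⟪s, uvec θ⟫ ≤ ⟪x, uvec θ⟫) ∧ p θ = ⟪x, uvec θ⟫ := by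
    intro θ
    have hco : Continuous (fun s : E2 => ⟪s, uvec θ⟫) := continuous_id.inner continuous_const
    obtain ⟨x, hxK, hxmax⟩ := hKc.exists_isMaxOn hKne hco.continuousOn
    refine ⟨x, hxK, fun s hs => hxmax hs, ?_⟩
    have hg : IsGreatest ((fun s : E2 => ⟪s - 0, uvec θ⟫) '' K) ⟪x, uvec θ⟫ := by
      constructor
      · exact ⟨x, hxK, by simp⟩
      · rintro r ⟨s, hs, rfl⟩; simpa using hxmax hs
    simpa [hp, suppf] using hg.csSup_eq
  -- p is positive
  obtain ⟨ε, hε, hball⟩ := Metric.mem_nhds_iff.1 (mem_interior_iff_mem_nhds.1 h0)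
  have hballK : ball (0:E2) ε ⊆ K := hball
  have hppos : ∀ θ, 0 < p θ := by
    intro θ
    obtain ⟨x, hxK, hxmax, hxp⟩ := hmax θ
    have hmem : (ε/2) • uvec θ ∈ K := by
      apply hballK
      simp [norm_smul, norm_uvec]
      rw [abs_of_pos hε]; linarith
    have := hxmax _ hmem
    rw [real_inner_smul_left, real_inner_self_eq_norm_sq, norm_uvec] at this
    rw [hxp]
    nlinarith
  -- membership in D
  have hmemD : ∀ (t : ℝ) (θ : ℝ), 0 ≤ t → (t • uvec θ ∈ D ↔ ∃ s ∈ K, t ^ 2 ≤ 2 * (t * ⟪s, uvec θ⟫)) := by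
    intro t θ ht
    rw [hD]
    simp only [Set.mem_iUnion, mem_closedBall, exists_prop]
    refine exists_congr fun s => and_congr_right fun _ => ?_
    rw [dist_eq_norm]
    rw [show (‖t • uvec θ - s‖ ≤ ‖s‖) ↔ (‖t • uvec θ - s‖ ^ 2 ≤ ‖s‖ ^ 2) from
      (pow_le_pow_iff_left₀ (norm_nonneg _) (norm_nonneg _) two_ne_zero).symm]
    rw [@norm_sub_sq_real, norm_smul, norm_uvec, real_inner_smul_left, Real.norm_eq_abs,
      abs_of_nonneg ht]
    constructor <;> intro h <;> nlinarith [real_inner_comm s (uvec θ)]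
  -- Part 1
  have claim1 : ∀ θ, d θ = 2 * p θ := by
    intro θ
    obtain ⟨x, hxK, hxmax, hxp⟩ := hmax θ
    have hset : {t : ℝ | 0 ≤ t ∧ t • uvec θ ∈ D} = Set.Icc 0 (2 * p θ) := by
      ext t
      simp only [Set.mem_setOf_eq, Set.mem_Icc]
      constructor
      · rintro ⟨ht, htD⟩
        refine ⟨ht, ?_⟩
        obtain ⟨s, hsK, hts⟩ := (hmemD t θ ht).1 htD
        have hsle : ⟪s, uvec θ⟫ ≤ p θ := by rw [hxp]; exact hxmax s hsK
        rcases eq_or_lt_of_le ht with h | h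
        · rw [← h]; linarith [hppos θ]
        · nlinarith
      · rintro ⟨ht, htle⟩
        refine ⟨ht, (hmemD t θ ht).2 ⟨x, hxK, ?_⟩⟩
        rw [← hxp]
        nlinarith
    rw [hd θ, hset, csSup_Icc (by linarith [hppos θ])]
  -- differentiability of p
  have hpd : p = fun θ => d θ / 2 := by funext θ; rw [claim1 θ]; ring
  have hdiffp : Differentiable ℝ p := by rw [hpd]; exact hdiff.div_const 2
  have hderivp : ∀ θ, deriv p θ = deriv d θ / 2 := by
    intro θ; rw [hpd, deriv_div_const]
  -- uniqueness of maximizer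
  have claim2 : ∀ θ : ℝ, ∀ x ∈ K, (∀ s ∈ K, ⟪s, uvec θ⟫ ≤ ⟪x, uvec θ⟫) →
      x = (2:ℝ)⁻¹ • (d θ • uvec θ + deriv d θ • vvec θ) := by
    intro θ x hxK hxmax
    obtain ⟨x', hx'K, hx'max, hx'p⟩ := hmax θ
    have ha : ⟪x, uvec θ⟫ = p θ := by
      rw [hx'p]; exact le_antisymm (hx'max x hxK) (hxmax x' hx'K)
    set b : ℝ := ⟪x, vvec θ⟫ with hbdef
    set A : ℝ → ℝ := fun φ => Real.cos (φ - θ) * p θ + Real.sin (φ - θ) * b with hA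
    have hlow : ∀ φ, A φ ≤ p φ := by
      intro φ
      obtain ⟨y, hyK, hymax, hyp⟩ := hmax φ
      have hx1 : ⟪x, uvec φ⟫ ≤ p φ := by rw [hyp]; exact hymax x hxK
      have hx2 : ⟪x, uvec φ⟫ = A φ := by
        rw [uvec_comb θ φ, inner_add_right, real_inner_smul_right, real_inner_smul_right, ha, hA]
      rw [← hx2]; exact hx1
    have hgmin : IsLocalMin (fun φ => p φ - A φ) θ := by
      apply Filter.Eventually.of_forall
      intro φ
      have h1 : A θ = p θ := by simp [hA]
      have h2 := hlow φ
      simp only [h1]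
      linarith
    have hderA : HasDerivAt A b θ := by
      have h1 : HasDerivAt (fun φ : ℝ => φ - θ) 1 θ := (hasDerivAt_id θ).sub_const θ
      have hc : HasDerivAt (fun φ => Real.cos (φ - θ)) (-Real.sin (θ - θ) * 1) θ := h1.cos
      have hs : HasDerivAt (fun φ => Real.sin (φ - θ)) (Real.cos (θ - θ) * 1) θ := h1.sin
      have := (hc.mul_const (p θ)).add (hs.mul_const b)
      simpa [hA, Pi.add_def] using this
    have hderg : HasDerivAt (fun φ => p φ - A φ) (deriv p θ - b) θ :=
      ((hdiffp θ).hasDerivAt).sub hderA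
    have hzero : deriv p θ - b = 0 := hgmin.hasDerivAt_eq_zero hderg
    have hb : b = deriv d θ / 2 := by rw [← hderivp θ]; linarith
    have hx : x = ⟪x, uvec θ⟫ • uvec θ + ⟪x, vvec θ⟫ • vvec θ := decomp x θ
    rw [hx, ha, ← hbdef, hb, claim1 θ]
    rw [smul_add, smul_smul, smul_smul,
      show (2:ℝ)⁻¹ * (2 * p θ) = p θ by ring,
      show (2:ℝ)⁻¹ * deriv d θ = deriv d θ / 2 by ring]
  refine ⟨fun θ => claim1 θ, ?_⟩
  ext x
  simp only [Set.mem_setOf_eq]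
  constructor
  · intro hx
    rw [hKclosed.frontier_eq] at hx
    obtain ⟨hxK, hxnint⟩ := hx
    obtain ⟨f, hf⟩ := geometric_hahn_banach_open_point hKconv.interior isOpen_interior hxnint
    have hfle : ∀ a ∈ K, f a ≤ f x := by
      intro a ha
      have hseq : ∀ t ∈ Set.Ioo (0:ℝ) 1, (1 - t) * f a < f x := by
        intro t ht
        have hmem : (1 - t) • a + t • (0:E2) ∈ interior K :=
          Convex.combo_self_interior_mem_interior hKconv ha h0 (by linarith [ht.2]) ht.1
            (by ring)
        have := hf _ hmem
        simpa [map_add, _root_.map_smul, smul_eq_mul] using this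
      have htend : Filter.Tendsto (fun t : ℝ => (1 - t) * f a) (nhdsWithin 0 (Set.Ioi 0))
          (nhds (f a)) := by
        have hcont : Continuous fun t : ℝ => (1 - t) * f a := (continuous_const.sub continuous_id).mul continuous_const
        have h1 := hcont.tendsto 0
        simpa using h1.mono_left nhdsWithin_le_nhds
      refine le_of_tendsto htend ?_
      filter_upwards [Ioo_mem_nhdsGT_of_mem (by constructor <;> norm_num : (0:ℝ) ∈ Set.Ico (0:ℝ) 1)] with t ht
      exact (hseq t ht).le
    set w : E2 := (InnerProductSpace.toDual ℝ E2).symm f with hw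
    have hwy : ∀ y : E2, ⟪w, y⟫ = f y := by
      intro y; rw [hw, InnerProductSpace.toDual_symm_apply]
    have hfx : 0 < f x := by
      have := hf 0 h0
      simpa using this
    have hwne : w ≠ 0 := by
      intro h
      have := hwy x
      rw [h] at this
      simp at this
      rw [← this] at hfx
      exact lt_irrefl 0 hfx
    set u : E2 := ‖w‖⁻¹ • w with hu
    have hun : ‖u‖ = 1 := by
      rw [hu, norm_smul, norm_inv, norm_norm, inv_mul_cancel₀ (norm_ne_zero_iff.2 hwne)]
    obtain ⟨θ, hθ⟩ := exists_unit_angle u hun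
    have hmaxx : ∀ s ∈ K, ⟪s, uvec θ⟫ ≤ ⟪x, uvec θ⟫ := by
      intro s hs
      have h1 : ⟪s, w⟫ = f s := by rw [real_inner_comm]; exact hwy s
      have h2 : ⟪x, w⟫ = f x := by rw [real_inner_comm]; exact hwy x
      rw [hθ, hu, real_inner_smul_right, real_inner_smul_right, h1, h2]
      exact mul_le_mul_of_nonneg_left (hfle s hs) (inv_nonneg.2 (norm_nonneg _))
    exact ⟨θ, claim2 θ x hxK hmaxx⟩
  · rintro ⟨θ, rfl⟩
    obtain ⟨x', hx'K, hx'max, hx'p⟩ := hmax θ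
    rw [← claim2 θ x' hx'K hx'max, hKclosed.frontier_eq]
    refine ⟨hx'K, fun hint => ?_⟩
    obtain ⟨δ, hδ, hball'⟩ := Metric.isOpen_iff.1 isOpen_interior x' hint
    have hmem : x' + (δ/2) • uvec θ ∈ K := by
      apply interior_subset
      apply hball'
      rw [mem_ball, dist_self_add_left, norm_smul, norm_uvec, Real.norm_eq_abs,
        abs_of_pos (half_pos hδ)]
      linarith
    have hle := hx'max _ hmem
    rw [inner_add_left, real_inner_smul_left, real_inner_self_eq_norm_sq, norm_uvec] at hle
    nlinarith
end
end
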